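/- Under the accurate signal model, for any collection of N agents whose log-likelihood-ratio LMGFs Λ_k are strictly convex (informative agents), all unique negative zeros coincide: t_k = −1 for all k; consequently the uniform weights π = (1/N)𝟙 achieve the upper bound ∑_k Φ_k on the error exponent. -/

import Mathlib

open intervalIntegral MeasureTheory Set

/-- Accurate signal model, network version: if each informative agent's LMGF `Λ_k` is
strictly convex and differentiable with `Λ_k 0 = 0`, `Λ_k'(0) > 0` and `Λ_k(-1) = 0`,
then every negative zero of `Λ_k` equals `-1`, and the uniform weights `π = (1/N)𝟙`
achieve the upper bound `∑_k Φ_k` on the error exponent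
`-inf_t ∑_k φ_k(π_k t)`, where `φ_k(t) = ∫₀ᵗ Λ_k(τ)/τ dτ` and `Φ_k = -inf_t φ_k(t)`. -/
theorem accurate_model_uniform_optimal (N : ℕ) (hN : 0 < N)
    (Λ : Fin N → ℝ → ℝ)
    (hconv : ∀ k, StrictConvexOn ℝ Set.univ (Λ k))
    (hdiff : ∀ k, Differentiable ℝ (Λ k))
    (h0 : ∀ k, Λ k 0 = 0) (hd : ∀ k, 0 < deriv (Λ k) 0)
    (hneg1 : ∀ k, Λ k (-1) = 0)
    (φ : Fin N → ℝ → ℝ)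
    (hφ : ∀ k t, φ k t = ∫ τ in (0 : ℝ)..t, Λ k τ / τ)
    (Φ : Fin N → ℝ) (hΦ : ∀ k, Φ k = -(⨅ t : ℝ, φ k t)) :
    (∀ k, ∀ t : ℝ, t < 0 → Λ k t = 0 → t = -1) ∧
      -(⨅ t : ℝ, ∑ k, φ k ((1 / (N : ℝ)) * t)) = ∑ k, Φ k := by
  constructor
  · -- Part 1: unique negative zero
    intro k t ht hz
    by_contra hne
    rcases lt_or_gt_of_ne hne with h | h
    · -- t < -1 : then -1 is a strict convex combination of t and 0
      have ha : (0:ℝ) < -1 / t := by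
        apply div_pos_of_neg_of_neg <;> linarith
      have hb : (0:ℝ) < 1 - (-1 / t) := by
        have : -1 / t < 1 := by
          rw [div_lt_one_of_neg (by linarith)]; linarith
        linarith
      have := (hconv k).2 (Set.mem_univ t) (Set.mem_univ 0)
        (by intro h'; rw [h'] at ht; exact lt_irrefl _ ht) ha hb (by ring)
      rw [hz, h0 k] at this
      have hpt : (-1 / t) • t + (1 - (-1 / t)) • (0:ℝ) = -1 := by
        field_simp
        simp only [smul_eq_mul, mul_zero, add_zero, neg_mul, one_div, inv_mul_cancel₀ (ne_of_lt ht)]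
      rw [hpt, hneg1 k] at this
      simp at this
    · -- -1 < t < 0 : then t is a strict convex combination of -1 and 0
      have ha : (0:ℝ) < -t := by linarith
      have hb : (0:ℝ) < 1 - (-t) := by linarith
      have := (hconv k).2 (Set.mem_univ (-1:ℝ)) (Set.mem_univ 0)
        (by norm_num) ha hb (by ring)
      rw [hneg1 k, h0 k] at this
      have hpt : (-t) • (-1:ℝ) + (1 - (-t)) • (0:ℝ) = t := by
        simp only [smul_eq_mul]; ring
      rw [hpt] at this
      simp [hz] at this
  · -- Part 2: uniform weights achieve the bound
    set g : Fin N → ℝ → ℝ :=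
      fun k => Function.update (fun τ => Λ k τ / τ) 0 (deriv (Λ k) 0) with hgdef
    have hgne : ∀ k (τ : ℝ), τ ≠ 0 → g k τ = Λ k τ / τ := by
      intro k τ hτ
      simp [hgdef, Function.update_of_ne hτ]
    have hslope : ∀ k (τ : ℝ), slope (Λ k) 0 τ = Λ k τ / τ := by
      intro k τ
      rw [slope_def_field, h0 k, sub_zero, sub_zero]
    -- g k is monotone on all of ℝ
    have hgm : ∀ k, Monotone (g k) := by
      intro k
      have hc : ConvexOn ℝ Set.univ (Λ k) := (hconv k).convexOn
      intro x y hxy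
      rcases eq_or_lt_of_le hxy with rfl | hxy
      · exact le_rfl
      by_cases hx : x = 0
      · subst hx
        have hy : y ≠ 0 := ne_of_gt hxy
        rw [hgne k y hy, ← hslope k y]
        have := hc.deriv_le_slope (Set.mem_univ 0) (Set.mem_univ y) hxy
          ((hdiff k).differentiableAt)
        simpa [hgdef] using this
      by_cases hy : y = 0
      · subst hy
        rw [hgne k x hx, ← hslope k x, slope_comm]
        have := hc.slope_le_deriv (Set.mem_univ x) (Set.mem_univ 0) hxy
          ((hdiff k).differentiableAt)
        simpa [hgdef] using this
      · rw [hgne k x hx, hgne k y hy]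
        have := hc.secant_mono (Set.mem_univ 0) (Set.mem_univ x) (Set.mem_univ y)
          hx hy hxy.le
        simpa [h0 k] using this
    have hg1 : ∀ k, g k (-1) = 0 := by
      intro k
      rw [hgne k (-1) (by norm_num), hneg1 k, zero_div]
    have hint : ∀ k (a b : ℝ), IntervalIntegrable (g k) volume a b := by
      intro k a b
      exact ((hgm k).monotoneOn _).intervalIntegrable
    -- φ in terms of g
    have hφg : ∀ k t, φ k t = ∫ τ in (0:ℝ)..t, g k τ := by
      intro k t
      rw [hφ]
      apply intervalIntegral.integral_congr_ae
      have h0ae : ∀ᵐ τ : ℝ, τ ≠ 0 := by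
        have : (volume : Measure ℝ) {0} = 0 := measure_singleton 0
        have := measure_eq_zero_iff_ae_notMem.mp this
        filter_upwards [this] with τ hτ
        simpa using hτ
      filter_upwards [h0ae] with τ hτ _
      exact (hgne k τ hτ).symm
    -- each φ k is minimized at -1
    have hmin : ∀ k t, φ k (-1) ≤ φ k t := by
      intro k t
      have hsplit : φ k t = φ k (-1) + ∫ τ in (-1:ℝ)..t, g k τ := by
        rw [hφg, hφg,
          intervalIntegral.integral_add_adjacent_intervals (hint k 0 (-1)) (hint k (-1) t)]
      rw [hsplit, le_add_iff_nonneg_right]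
      rcases le_total (-1:ℝ) t with h | h
      · refine intervalIntegral.integral_nonneg h (fun τ hτ => ?_)
        have := hgm k hτ.1
        rw [hg1 k] at this
        exact this
      · rw [integral_symm t (-1), neg_nonneg, ← neg_nonneg, ← intervalIntegral.integral_neg]
        refine intervalIntegral.integral_nonneg h (fun τ hτ => ?_)
        have := hgm k hτ.2
        rw [hg1 k] at this
        simpa using this
    have hiInf : ∀ k, (⨅ t : ℝ, φ k t) = φ k (-1) := by
      intro k
      refine le_antisymm (ciInf_le ⟨φ k (-1), ?_⟩ (-1)) (le_ciInf (hmin k))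
      rintro x ⟨t, rfl⟩
      exact hmin k t
    -- the network objective
    have hNne : (N : ℝ) ≠ 0 := Nat.cast_ne_zero.mpr hN.ne'
    have hFmin : ∀ t : ℝ, (∑ k, φ k (-1)) ≤ ∑ k, φ k ((1 / (N : ℝ)) * t) :=
      fun t => Finset.sum_le_sum fun k _ => hmin k _
    have hFval : (∑ k, φ k ((1 / (N : ℝ)) * (-(N : ℝ)))) = ∑ k, φ k (-1) := by
      congr 1
      ext k
      congr 1
      field_simp
    have hiInfF : (⨅ t : ℝ, ∑ k, φ k ((1 / (N : ℝ)) * t)) = ∑ k, φ k (-1) := by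
      refine le_antisymm ?_ (le_ciInf hFmin)
      calc (⨅ t : ℝ, ∑ k, φ k ((1 / (N : ℝ)) * t))
          ≤ ∑ k, φ k ((1 / (N : ℝ)) * (-(N : ℝ))) := by
            refine ciInf_le ⟨∑ k, φ k (-1), ?_⟩ _
            rintro x ⟨t, rfl⟩
            exact hFmin t
        _ = ∑ k, φ k (-1) := hFval
    rw [hiInfF, ← Finset.sum_neg_distrib]
    refine Finset.sum_congr rfl fun k _ => ?_
    rw [hΦ k, hiInf k]
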